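/- For a fixed real number k > -1 and coprime positive integers m, n, the sum of k-th powers of primes p ≡ n (mod m) with p ≤ x is asymptotic to the number of primes p ≡ n (mod m) with p ≤ x^{k+1}; that is, π_k(x; m, n) / π(x^{k+1}; m, n) → 1 as x → ∞. -/

import Mathlib

open Real Filter Finset

/-- The finset of primes `p ≤ x` with `p ≡ n (mod m)`. -/
noncomputable def primesTo (x : ℝ) (m n : ℕ) : Finset ℕ :=
  (Finset.range (⌊x⌋₊ + 1)).filter fun p => p.Prime ∧ p % m = n % m

/-- `π(x; m, n)`, the number of primes `p ≤ x` with `p ≡ n (mod m)`. -/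
noncomputable def piCount (x : ℝ) (m n : ℕ) : ℝ := (primesTo x m n).card

/-- `π_k(x; m, n) = Σ_{p ≤ x, p ≡ n (mod m)} p^k`. -/
noncomputable def piPow (k x : ℝ) (m n : ℕ) : ℝ :=
  ∑ p ∈ primesTo x m n, (p : ℝ) ^ k

section aux

open MeasureTheory intervalIntegral Set Asymptotics

/-- logarithmic integral from 2 -/
noncomputable def li (x : ℝ) : ℝ := ∫ t in (2:ℝ)..x, 1 / Real.log t

/-- indicator of primes ≡ n mod m -/
noncomputable def cInd (m n : ℕ) (p : ℕ) : ℝ := if p.Prime ∧ p % m = n % m then 1 else 0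

lemma piCount_eq_sum (x : ℝ) (m n : ℕ) :
    piCount x m n = ∑ p ∈ Finset.Icc 0 ⌊x⌋₊, cInd m n p := by
  have h : Finset.range (⌊x⌋₊ + 1) = Finset.Icc 0 ⌊x⌋₊ := by
    ext p; simp [Nat.lt_succ_iff]
  rw [piCount, primesTo, h, Finset.card_filter]
  simp [cInd]

lemma piCount_nonneg (x : ℝ) (m n : ℕ) : 0 ≤ piCount x m n := by
  rw [piCount]; positivity

lemma piCount_le_floor (x : ℝ) (m n : ℕ) : piCount x m n ≤ (⌊x⌋₊ : ℝ) + 1 := by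
  have h1 : (primesTo x m n).card ≤ (Finset.range (⌊x⌋₊ + 1)).card :=
    Finset.card_le_card (Finset.filter_subset _ _)
  rw [Finset.card_range] at h1
  rw [piCount]
  exact_mod_cast h1

lemma piCount_le (x : ℝ) (m n : ℕ) (hx : 0 ≤ x) : piCount x m n ≤ x + 1 := by
  have h2 : ((⌊x⌋₊ : ℝ) + 1) ≤ x + 1 := by
    have := Nat.floor_le hx; linarith
  exact le_trans (piCount_le_floor x m n) h2

lemma piCount_measurable (m n : ℕ) : Measurable (fun t : ℝ => piCount t m n) := by
  have : (fun t : ℝ => piCount t m n) = (fun N : ℕ =>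
      (((Finset.range (N + 1)).filter fun p => p.Prime ∧ p % m = n % m).card : ℝ)) ∘
      (Nat.floor : ℝ → ℕ) := rfl
  rw [this]
  exact Measurable.comp (measurable_from_nat) Nat.measurable_floor

lemma intervalIntegrable_mul_piCount (m n : ℕ) {g : ℝ → ℝ} {a b : ℝ} (hab : a ≤ b)
    (hg : ContinuousOn g (Set.Icc a b)) :
    IntervalIntegrable (fun t => g t * piCount t m n) MeasureTheory.volume a b := by
  rw [intervalIntegrable_iff_integrableOn_Icc_of_le hab]
  obtain ⟨M, hM⟩ := (isCompact_Icc (a := a) (b := b)).exists_bound_of_continuousOn hg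
  have hmeas : AEStronglyMeasurable (fun t => g t * piCount t m n)
      (MeasureTheory.volume.restrict (Set.Icc a b)) := by
    refine AEStronglyMeasurable.mul ?_
      ((piCount_measurable m n).aestronglyMeasurable.restrict)
    exact (hg.aestronglyMeasurable measurableSet_Icc)
  refine ⟨hmeas, MeasureTheory.HasFiniteIntegral.of_bounded (C := M * (max b 0 + 1)) ?_⟩
  refine (MeasureTheory.ae_restrict_iff' measurableSet_Icc).2 (Filter.Eventually.of_forall ?_)
  intro t ht
  have h1 : |g t| ≤ M := by simpa using hM t ht
  have h2 : piCount t m n ≤ max b 0 + 1 := by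
    rcases le_or_gt 0 t with h | h
    · have := piCount_le t m n h
      have : piCount t m n ≤ t + 1 := this
      have htb : t ≤ max b 0 := le_trans ht.2 (le_max_left _ _)
      linarith
    · have hf0 : ⌊t⌋₊ = 0 := Nat.floor_eq_zero.2 (by linarith)
      have := piCount_le_floor t m n
      rw [hf0] at this
      have hb0 : (0:ℝ) ≤ max b 0 := le_max_right _ _
      push_cast at this
      linarith
  have h0 : 0 ≤ piCount t m n := piCount_nonneg t m n
  have hMnn : 0 ≤ M := le_trans (abs_nonneg _) h1
  calc ‖g t * piCount t m n‖ = |g t| * piCount t m n := by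
        rw [norm_eq_abs, abs_mul, abs_of_nonneg h0]
    _ ≤ M * (max b 0 + 1) := by
        apply mul_le_mul h1 h2 h0 hMnn

lemma contOn_one_div_log : ContinuousOn (fun u : ℝ => 1 / Real.log u) (Set.Ioi 1) := by
  intro t ht
  have h1 : (0:ℝ) < t := lt_trans one_pos ht
  have h2 : Real.log t ≠ 0 := ne_of_gt (Real.log_pos ht)
  exact (ContinuousAt.div continuousAt_const (Real.continuousAt_log h1.ne') h2).continuousWithinAt

lemma uIcc_subset_Ioi {a b : ℝ} (ha : 1 < a) (hb : 1 < b) : Set.uIcc a b ⊆ Set.Ioi 1 := by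
  rw [Set.uIcc]
  intro t ht
  exact lt_of_lt_of_le (lt_min ha hb) ht.1

lemma intervalIntegrable_one_div_log {a b : ℝ} (ha : 1 < a) (hb : 1 < b) :
    IntervalIntegrable (fun u : ℝ => 1 / Real.log u) MeasureTheory.volume a b :=
  (contOn_one_div_log.mono (uIcc_subset_Ioi ha hb)).intervalIntegrable

lemma li_hasDerivAt {t : ℝ} (ht : 1 < t) : HasDerivAt li (1 / Real.log t) t := by
  refine intervalIntegral.integral_hasDerivAt_right
    (intervalIntegrable_one_div_log one_lt_two ht) ?_ ?_
  · exact (contOn_one_div_log.stronglyMeasurableAtFilter isOpen_Ioi) t ht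
  · exact contOn_one_div_log.continuousAt (Ioi_mem_nhds ht)

lemma li_continuousOn : ContinuousOn li (Set.Ioi 1) :=
  fun t ht => ((li_hasDerivAt ht).continuousAt).continuousWithinAt

lemma li_sub_li {a b : ℝ} (ha : 1 < a) (hb : 1 < b) :
    li b - li a = ∫ u in a..b, 1 / Real.log u := by
  rw [li, li]
  exact intervalIntegral.integral_interval_sub_left
    (intervalIntegrable_one_div_log one_lt_two hb)
    (intervalIntegrable_one_div_log one_lt_two ha)

lemma sqrt_four : Real.sqrt 4 = 2 := by
  rw [show (4:ℝ) = 2^2 by norm_num, Real.sqrt_sq (by norm_num)]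

lemma li_lb {y : ℝ} (hy : 4 ≤ y) : (y - Real.sqrt y) / Real.log y ≤ li y := by
  have hsy : 2 ≤ Real.sqrt y := by
    rw [← sqrt_four]; exact Real.sqrt_le_sqrt hy
  have hy1 : (1:ℝ) < y := by linarith
  have hsyy : Real.sqrt y ≤ y := by
    have h := Real.sqrt_le_sqrt (show y ≤ y^2 by nlinarith)
    rwa [Real.sqrt_sq (by linarith : (0:ℝ) ≤ y)] at h
  have hly : 0 < Real.log y := Real.log_pos hy1
  have hsplit : li y - li (Real.sqrt y) = ∫ u in (Real.sqrt y)..y, 1 / Real.log u :=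
    li_sub_li (by linarith) hy1
  have h1 : 0 ≤ li (Real.sqrt y) := by
    rw [li]
    apply intervalIntegral.integral_nonneg (by linarith)
    intro u hu
    have h1u : 1 < u := by have := hu.1; linarith
    have := Real.log_pos h1u
    positivity
  have h2 : (y - Real.sqrt y) * (1 / Real.log y) ≤ ∫ u in (Real.sqrt y)..y, 1 / Real.log u := by
    have hconst : ∫ _ in (Real.sqrt y)..y, (1 / Real.log y) = (y - Real.sqrt y) * (1 / Real.log y) := by
      rw [intervalIntegral.integral_const, smul_eq_mul]
    rw [← hconst]
    apply intervalIntegral.integral_mono_on hsyy intervalIntegrable_const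
      (intervalIntegrable_one_div_log (by linarith) hy1)
    intro u hu
    have hu1 : 1 < u := by have := hu.1; linarith
    have : Real.log u ≤ Real.log y := Real.log_le_log (by linarith) hu.2
    apply one_div_le_one_div_of_le (Real.log_pos hu1) this
  calc (y - Real.sqrt y) / Real.log y = (y - Real.sqrt y) * (1 / Real.log y) := by ring
    _ ≤ ∫ u in (Real.sqrt y)..y, 1 / Real.log u := h2
    _ = li y - li (Real.sqrt y) := hsplit.symm
    _ ≤ li y := by linarith

lemma continuousOn_rpow_c (c : ℝ) : ContinuousOn (fun t : ℝ => t ^ c) (Set.Ioi 0) :=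
  fun t ht => (Real.continuousAt_rpow_const t c (Or.inl (ne_of_gt ht))).continuousWithinAt

lemma abel_identity (k : ℝ) (m n : ℕ) {x : ℝ} (hx : 2 ≤ x) :
    piPow k x m n = x ^ k * piCount x m n -
      ∫ t in (3/2 : ℝ)..x, (k * t ^ (k - 1)) * piCount t m n := by
  have hfloor : ⌊(3/2:ℝ)⌋₊ = 1 := by norm_num [Nat.floor_eq_iff]
  have hdiff : ∀ t ∈ Set.Icc (3/2 : ℝ) x, DifferentiableAt ℝ (fun t : ℝ => t ^ k) t := by
    intro t ht
    exact Real.differentiableAt_rpow_const_of_ne k (by have := ht.1; intro h; rw [h] at this; linarith)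
  have hint : IntegrableOn (deriv fun t : ℝ => t ^ k) (Set.Icc (3/2 : ℝ) x)
      MeasureTheory.volume := by
    have hcont : ContinuousOn (fun t : ℝ => k * t ^ (k - 1)) (Set.Icc (3/2 : ℝ) x) := by
      apply (continuousOn_const.mul (continuousOn_rpow_c (k-1))).mono
      intro t ht; have := ht.1; exact Set.mem_Ioi.2 (by linarith)
    refine (hcont.integrableOn_Icc).congr_fun ?_ measurableSet_Icc
    intro t ht
    have ht0 : t ≠ 0 := by have := ht.1; intro h; rw [h] at this; linarith
    rw [Real.deriv_rpow_const t k]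
  have habel := sum_mul_eq_sub_sub_integral_mul (cInd m n) (a := 3/2) (b := x)
    (f := fun t : ℝ => t ^ k) (by norm_num) (by linarith) hdiff hint
  rw [hfloor] at habel
  -- the boundary sum at 1 vanishes
  have hIcc01 : ∑ j ∈ Finset.Icc 0 1, cInd m n j = 0 := by
    rw [show Finset.Icc 0 1 = ({0, 1} : Finset ℕ) from rfl, Finset.sum_insert (by decide),
      Finset.sum_singleton]
    simp [cInd, Nat.not_prime_zero, Nat.not_prime_one]
  have hfx : 2 ≤ ⌊x⌋₊ := Nat.le_floor (by exact_mod_cast hx)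
  -- identify LHS with piPow
  have hlhs : piPow k x m n = ∑ p ∈ Finset.Ioc 1 ⌊x⌋₊, (p:ℝ) ^ k * cInd m n p := by
    rw [piPow, primesTo, Finset.sum_filter]
    have hind : ∀ p ∈ Finset.range (⌊x⌋₊ + 1),
        (if p.Prime ∧ p % m = n % m then (p:ℝ) ^ k else 0) = (p:ℝ) ^ k * cInd m n p := by
      intro p _; rw [cInd]; split <;> simp
    rw [Finset.sum_congr rfl hind]
    rw [Finset.range_eq_Ico, ← Finset.sum_Ico_consecutive _ (by omega : 0 ≤ 2) (by omega : 2 ≤ ⌊x⌋₊ + 1)]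
    have h01 : ∑ p ∈ Finset.Ico (0:ℕ) 2, ((p:ℕ):ℝ) ^ k * cInd m n p = 0 := by
      rw [show Finset.Ico (0:ℕ) 2 = ({0, 1} : Finset ℕ) from rfl, Finset.sum_insert (by decide),
        Finset.sum_singleton]
      simp [cInd, Nat.not_prime_zero, Nat.not_prime_one]
    have hIco : Finset.Ico 2 (⌊x⌋₊ + 1) = Finset.Ioc 1 ⌊x⌋₊ := by
      ext p; simp only [Finset.mem_Ico, Finset.mem_Ioc]; omega
    rw [h01, hIco, zero_add]
  -- identify integral
  have hio : ∫ t in Set.Ioc (3/2:ℝ) x, deriv (fun t : ℝ => t ^ k) t * ∑ j ∈ Finset.Icc 0 ⌊t⌋₊, cInd m n j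
      = ∫ t in (3/2 : ℝ)..x, (k * t ^ (k - 1)) * piCount t m n := by
    rw [intervalIntegral.integral_of_le (by linarith : (3/2:ℝ) ≤ x)]
    apply MeasureTheory.setIntegral_congr_fun measurableSet_Ioc
    intro t ht
    have ht0 : t ≠ 0 := by have := ht.1; intro h; rw [h] at this; norm_num at this
    dsimp only
    rw [Real.deriv_rpow_const t k, ← piCount_eq_sum]
  rw [hlhs, habel, hIcc01, hio, ← piCount_eq_sum]
  ring

lemma li_ftc (k : ℝ) (hk : -1 < k) {x : ℝ} (hx : 2 ≤ x) :
    x ^ k * li x - (∫ t in (3/2:ℝ)..x, (k * t ^ (k-1)) * li t)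
      = (3/2:ℝ) ^ k * li (3/2) + (li (x ^ (k+1)) - li ((3/2:ℝ) ^ (k+1))) := by
  have hax : (3/2:ℝ) ≤ x := by linarith
  have huIcc : Set.uIcc (3/2:ℝ) x = Set.Icc (3/2:ℝ) x := Set.uIcc_of_le hax
  have hsub1 : Set.uIcc (3/2:ℝ) x ⊆ Set.Ioi 1 := by
    rw [huIcc]; intro t ht; exact Set.mem_Ioi.2 (by have := ht.1; linarith)
  have hsub0 : Set.uIcc (3/2:ℝ) x ⊆ Set.Ioi 0 := by
    intro t ht; have := hsub1 ht; exact Set.mem_Ioi.2 (by have := Set.mem_Ioi.1 this; linarith)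
  have hderiv : ∀ t ∈ Set.uIcc (3/2:ℝ) x, HasDerivAt (fun t : ℝ => t ^ k * li t)
      (k * t ^ (k-1) * li t + t ^ k * (1 / Real.log t)) t := by
    intro t ht
    have ht1 : 1 < t := hsub1 ht
    have ht0 : t ≠ 0 := by linarith
    exact (Real.hasDerivAt_rpow_const (Or.inl ht0)).mul (li_hasDerivAt ht1)
  have hcontA : ContinuousOn (fun t : ℝ => k * t ^ (k-1) * li t) (Set.uIcc (3/2:ℝ) x) :=
    ((continuousOn_const.mul ((continuousOn_rpow_c (k-1)).mono hsub0))).mul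
      (li_continuousOn.mono hsub1)
  have hcontB : ContinuousOn (fun t : ℝ => t ^ k * (1 / Real.log t)) (Set.uIcc (3/2:ℝ) x) :=
    ((continuousOn_rpow_c k).mono hsub0).mul (contOn_one_div_log.mono hsub1)
  have hintA := hcontA.intervalIntegrable (μ := MeasureTheory.volume)
  have hintB := hcontB.intervalIntegrable (μ := MeasureTheory.volume)
  have hftc := intervalIntegral.integral_eq_sub_of_hasDerivAt hderiv (hintA.add hintB)
  rw [intervalIntegral.integral_add hintA hintB] at hftc
  -- substitution in the second integral
  have h1x : (1:ℝ) < x := by linarith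
  have hk1 : (0:ℝ) < k + 1 := by linarith
  have hone_lt_x : 1 < x ^ (k+1) := (Real.one_lt_rpow_iff (by linarith)).2 (Or.inl ⟨h1x, hk1⟩)
  have hone_lt_a : 1 < (3/2:ℝ) ^ (k+1) :=
    (Real.one_lt_rpow_iff (by norm_num)).2 (Or.inl ⟨by norm_num, hk1⟩)
  have hsubs : (∫ t in (3/2:ℝ)..x, t ^ k * (1 / Real.log t))
      = li (x ^ (k+1)) - li ((3/2:ℝ) ^ (k+1)) := by
    have hf : ∀ t ∈ Set.uIcc (3/2:ℝ) x, HasDerivAt (fun t : ℝ => t ^ (k+1)) ((k+1) * t ^ k) t := by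
      intro t ht
      have ht0 : t ≠ 0 := by have := hsub1 ht; intro h; rw [h] at this; norm_num at this
      have := Real.hasDerivAt_rpow_const (p := k+1) (Or.inl ht0)
      simpa using this
    have hf' : ContinuousOn (fun t : ℝ => (k+1) * t ^ k) (Set.uIcc (3/2:ℝ) x) :=
      continuousOn_const.mul ((continuousOn_rpow_c k).mono hsub0)
    have hg : ContinuousOn (fun u : ℝ => 1 / Real.log u)
        ((fun t : ℝ => t ^ (k+1)) '' Set.uIcc (3/2:ℝ) x) := by
      apply contOn_one_div_log.mono
      rintro u ⟨t, ht, rfl⟩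
      have ht1 : 1 < t := hsub1 ht
      exact Set.mem_Ioi.2 ((Real.one_lt_rpow_iff (by linarith)).2 (Or.inl ⟨ht1, hk1⟩))
    have h := intervalIntegral.integral_comp_smul_deriv' hf hf' hg
    have heq : (∫ t in (3/2:ℝ)..x, t ^ k * (1 / Real.log t))
        = ∫ t in (3/2:ℝ)..x, ((k+1) * t ^ k) • ((fun u : ℝ => 1 / Real.log u) ∘ (fun t : ℝ => t ^ (k+1))) t := by
      apply intervalIntegral.integral_congr
      intro t ht
      have ht1 : 1 < t := hsub1 ht
      have ht0 : 0 < t := by linarith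
      have hlt : Real.log t ≠ 0 := ne_of_gt (Real.log_pos ht1)
      simp only [Function.comp_apply, smul_eq_mul, Real.log_rpow ht0]
      field_simp
    rw [heq, h, ← li_sub_li hone_lt_a hone_lt_x]
  rw [hsubs] at hftc
  -- hftc : ∫ A + (li (x^(k+1)) - li ((3/2)^(k+1))) = x^k * li x - (3/2)^k * li (3/2)
  linarith [hftc]

/-- the PNT error term -/
noncomputable def Er (m n : ℕ) (x : ℝ) : ℝ := piCount x m n - (1 / (Nat.totient m : ℝ)) * li x

lemma iiB (k : ℝ) {a b : ℝ} (ha : 1 < a) (hab : a ≤ b) :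
    IntervalIntegrable (fun t : ℝ => k * t ^ (k-1) * li t) MeasureTheory.volume a b := by
  have h1 : Set.uIcc a b ⊆ Set.Ioi 1 := uIcc_subset_Ioi ha (by linarith)
  have h0 : Set.uIcc a b ⊆ Set.Ioi 0 := fun t ht => Set.mem_Ioi.2
    (lt_trans one_pos (h1 ht))
  exact (((continuousOn_const.mul ((continuousOn_rpow_c (k-1)).mono h0))).mul
    (li_continuousOn.mono h1)).intervalIntegrable (μ := MeasureTheory.volume)

lemma iiP (k : ℝ) (m n : ℕ) {a b : ℝ} (ha : 1 < a) (hab : a ≤ b) :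
    IntervalIntegrable (fun t : ℝ => (k * t ^ (k-1)) * piCount t m n)
      MeasureTheory.volume a b := by
  apply intervalIntegrable_mul_piCount m n hab
  apply (continuousOn_const.mul (continuousOn_rpow_c (k-1))).mono
  intro t ht
  exact Set.mem_Ioi.2 (by have := ht.1; linarith)

lemma iiE (k : ℝ) (m n : ℕ) {a b : ℝ} (ha : 1 < a) (hab : a ≤ b) :
    IntervalIntegrable (fun t : ℝ => (k * t ^ (k-1)) * Er m n t)
      MeasureTheory.volume a b := by
  have heq : (fun t : ℝ => (k * t ^ (k-1)) * Er m n t)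
      = fun t : ℝ => (k * t ^ (k-1)) * piCount t m n
        - (1 / (Nat.totient m : ℝ)) * (k * t ^ (k-1) * li t) :=
    funext fun t => by rw [Er]; ring
  rw [heq]
  exact (iiP k m n ha hab).sub ((iiB k ha hab).const_mul _)

lemma diff_eq (k : ℝ) (hk : -1 < k) (m n : ℕ) {x : ℝ} (hx : 2 ≤ x) :
    piPow k x m n - piCount (x ^ (k+1)) m n
      = (1 / (Nat.totient m : ℝ)) * ((3/2:ℝ) ^ k * li (3/2) - li ((3/2:ℝ) ^ (k+1)))
        + x ^ k * Er m n x - (∫ t in (3/2:ℝ)..x, (k * t ^ (k-1)) * Er m n t)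
        - Er m n (x ^ (k+1)) := by
  have habel := abel_identity k m n hx
  have hftc := li_ftc k hk hx
  have hcx : piCount x m n = (1 / (Nat.totient m : ℝ)) * li x + Er m n x := by rw [Er]; ring
  have hcy : piCount (x ^ (k+1)) m n
      = (1 / (Nat.totient m : ℝ)) * li (x ^ (k+1)) + Er m n (x ^ (k+1)) := by rw [Er]; ring
  have hI : (∫ t in (3/2:ℝ)..x, (k * t ^ (k-1)) * piCount t m n)
      = (1 / (Nat.totient m : ℝ)) * (∫ t in (3/2:ℝ)..x, k * t ^ (k-1) * li t)
        + ∫ t in (3/2:ℝ)..x, (k * t ^ (k-1)) * Er m n t := by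
    have heq : (fun t : ℝ => (k * t ^ (k-1)) * piCount t m n)
        = fun t : ℝ => (1 / (Nat.totient m : ℝ)) * (k * t ^ (k-1) * li t)
          + (k * t ^ (k-1)) * Er m n t :=
      funext fun t => by rw [Er]; ring
    rw [heq, intervalIntegral.integral_add
      (((iiB k (by norm_num) (by linarith))).const_mul _)
      (iiE k m n (by norm_num) (by linarith)),
      intervalIntegral.integral_const_mul]
  rw [habel, hI, hcx, hcy]
  linear_combination ((1:ℝ) / (Nat.totient m : ℝ)) * hftc

lemma tendsto_sqrt_atTop' : Tendsto Real.sqrt atTop atTop := by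
  refine Filter.Tendsto.congr' ?_ (tendsto_rpow_atTop (by norm_num : (0:ℝ) < 1/2))
  filter_upwards [eventually_ge_atTop (0:ℝ)] with x hx
  rw [Real.sqrt_eq_rpow]

lemma tendsto_log_mul_exp {β : ℝ} (hβ : 0 < β) :
    Tendsto (fun x : ℝ => Real.log x * Real.exp (-β * Real.sqrt (Real.log x)))
      atTop (nhds 0) := by
  have h1 : Tendsto (fun v : ℝ => v ^ 2 * Real.exp (-(β * v))) atTop (nhds 0) := by
    have h := (tendsto_pow_mul_exp_neg_atTop_nhds_zero 2).comp
      (Filter.Tendsto.const_mul_atTop hβ tendsto_id)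
    have h2 := h.const_mul (1 / β ^ 2)
    rw [mul_zero] at h2
    refine h2.congr' ?_
    filter_upwards with v
    have hβ2 : β ^ 2 ≠ 0 := by positivity
    simp only [Function.comp_apply, id_eq]
    field_simp
  have h2 : Tendsto (fun u : ℝ => u * Real.exp (-β * Real.sqrt u)) atTop (nhds 0) := by
    have h := h1.comp tendsto_sqrt_atTop'
    refine h.congr' ?_
    filter_upwards [eventually_ge_atTop (0:ℝ)] with u hu
    simp only [Function.comp_apply]
    rw [Real.sq_sqrt hu]
    ring_nf
  exact h2.comp Real.tendsto_log_atTop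

lemma isLittleO_exp_bound (k : ℝ) (hk : -1 < k) {β : ℝ} (hβ : 0 < β) :
    (fun x : ℝ => x ^ (k+1) * Real.exp (-β * Real.sqrt (Real.log x))) =o[atTop]
      (fun x : ℝ => x ^ (k+1) / Real.log x) := by
  have hne : ∀ᶠ x : ℝ in atTop, x ^ (k+1) / Real.log x = 0
      → x ^ (k+1) * Real.exp (-β * Real.sqrt (Real.log x)) = 0 := by
    filter_upwards [eventually_ge_atTop (2:ℝ)] with x hx h
    have hx0 : (0:ℝ) < x := by linarith
    have hl : 0 < Real.log x := Real.log_pos (by linarith)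
    have : 0 < x ^ (k+1) / Real.log x := div_pos (Real.rpow_pos_of_pos hx0 _) hl
    exact absurd h (ne_of_gt this)
  rw [Asymptotics.isLittleO_iff_tendsto' hne]
  refine (tendsto_log_mul_exp hβ).congr' ?_
  filter_upwards [eventually_ge_atTop (2:ℝ)] with x hx
  have hx0 : (0:ℝ) < x := by linarith
  have hl : 0 < Real.log x := Real.log_pos (by linarith)
  have hp : x ^ (k+1) ≠ 0 := ne_of_gt (Real.rpow_pos_of_pos hx0 _)
  rw [eq_div_iff (by positivity : x ^ (k+1) / Real.log x ≠ 0)]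
  field_simp

lemma isLittleO_half_bound (k : ℝ) (hk : -1 < k) :
    (fun x : ℝ => x ^ ((k+1)/2)) =o[atTop] (fun x : ℝ => x ^ (k+1) / Real.log x) := by
  have hne : ∀ᶠ x : ℝ in atTop, x ^ (k+1) / Real.log x = 0 → x ^ ((k+1)/2) = 0 := by
    filter_upwards [eventually_ge_atTop (2:ℝ)] with x hx h
    have hx0 : (0:ℝ) < x := by linarith
    have hl : 0 < Real.log x := Real.log_pos (by linarith)
    have : 0 < x ^ (k+1) / Real.log x := div_pos (Real.rpow_pos_of_pos hx0 _) hl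
    exact absurd h (ne_of_gt this)
  rw [Asymptotics.isLittleO_iff_tendsto' hne]
  have h0 := (isLittleO_log_rpow_atTop
    (by linarith : (0:ℝ) < (k+1)/2)).tendsto_div_nhds_zero
  refine h0.congr' ?_
  filter_upwards [eventually_ge_atTop (2:ℝ)] with x hx
  have hx0 : (0:ℝ) < x := by linarith
  have hl : 0 < Real.log x := Real.log_pos (by linarith)
  have hsum : x ^ (k+1) = x ^ ((k+1)/2) * x ^ ((k+1)/2) := by
    rw [← Real.rpow_add hx0]; ring_nf
  have hp : x ^ ((k+1)/2) ≠ 0 := ne_of_gt (Real.rpow_pos_of_pos hx0 _)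
  rw [div_div_eq_mul_div, hsum]
  field_simp

lemma tendsto_h_atTop (k : ℝ) (hk : -1 < k) :
    Tendsto (fun x : ℝ => x ^ (k+1) / Real.log x) atTop atTop := by
  have hb := (isLittleO_log_rpow_atTop (by linarith : (0:ℝ) < (k+1)/2)).bound one_pos
  apply tendsto_atTop_mono' atTop
    (show ∀ᶠ x : ℝ in atTop, x ^ ((k+1)/2) ≤ x ^ (k+1) / Real.log x from ?_)
    (tendsto_rpow_atTop (by linarith : (0:ℝ) < (k+1)/2))
  filter_upwards [eventually_ge_atTop (2:ℝ), hb] with x hx hbx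
  have hx0 : (0:ℝ) < x := by linarith
  have hl : 0 < Real.log x := Real.log_pos (by linarith)
  have hph : 0 < x ^ ((k+1)/2) := Real.rpow_pos_of_pos hx0 _
  have hlog : Real.log x ≤ x ^ ((k+1)/2) := by
    have := hbx
    rw [Real.norm_eq_abs, Real.norm_eq_abs, abs_of_pos hl, abs_of_pos hph, one_mul] at this
    exact this
  have hsum : x ^ (k+1) = x ^ ((k+1)/2) * x ^ ((k+1)/2) := by
    rw [← Real.rpow_add hx0]; ring_nf
  rw [hsum, le_div_iff₀ hl]
  exact mul_le_mul_of_nonneg_left hlog (le_of_lt hph)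

lemma err_littleO (k : ℝ) (hk : -1 < k) (m n : ℕ)
    (hPNT : ∃ α > (0:ℝ), (Er m n) =O[atTop]
      fun x => x * Real.exp (-(α/2) * Real.sqrt (Real.log x))) :
    ((fun x : ℝ => piPow k x m n - piCount (x ^ (k+1)) m n) =o[atTop]
      fun x : ℝ => x ^ (k+1) / Real.log x) ∧
    ((fun x : ℝ => Er m n (x ^ (k+1))) =o[atTop] fun x : ℝ => x ^ (k+1) / Real.log x) := by
  obtain ⟨α, hα, hO⟩ := hPNT
  set β := α/2 with hβdef
  have hβ : 0 < β := by rw [hβdef]; positivity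
  rw [Asymptotics.isBigO_iff] at hO
  obtain ⟨A₀, hA₀⟩ := hO
  set A := max A₀ 0 with hAdef
  have hA : 0 ≤ A := le_max_right _ _
  have hbound' : ∀ᶠ t : ℝ in atTop,
      |Er m n t| ≤ A * (t * Real.exp (-β * Real.sqrt (Real.log t))) := by
    filter_upwards [hA₀, eventually_ge_atTop (1:ℝ)] with t ht ht1
    have ht0 : (0:ℝ) < t := by linarith
    have hg0 : 0 < t * Real.exp (-β * Real.sqrt (Real.log t)) := by positivity
    rw [Real.norm_eq_abs, Real.norm_eq_abs, abs_of_pos hg0] at ht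
    calc |Er m n t| ≤ A₀ * (t * Real.exp (-β * Real.sqrt (Real.log t))) := ht
      _ ≤ A * (t * Real.exp (-β * Real.sqrt (Real.log t))) :=
          mul_le_mul_of_nonneg_right (le_max_left _ _) (le_of_lt hg0)
  obtain ⟨x₀', hx₀'⟩ := Filter.eventually_atTop.1 hbound'
  set x₀ := max x₀' 2 with hx₀def
  have hx₀2 : (2:ℝ) ≤ x₀ := le_max_right _ _
  have hbound : ∀ t, x₀ ≤ t → |Er m n t| ≤ A * (t * Real.exp (-β * Real.sqrt (Real.log t))) :=
    fun t ht => hx₀' t (le_trans (le_max_left _ _) ht)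
  have hk10 : (0:ℝ) < k + 1 := by linarith
  have hh := tendsto_h_atTop k hk
  have hterm1 : ∀ C : ℝ, (fun _ : ℝ => C) =o[atTop] (fun x : ℝ => x ^ (k+1) / Real.log x) := by
    intro C
    apply Asymptotics.isLittleO_const_left.2 (Or.inr ?_)
    exact tendsto_abs_atTop_atTop.comp hh
  have hterm2 : (fun x : ℝ => x ^ k * Er m n x) =o[atTop]
      (fun x : ℝ => x ^ (k+1) / Real.log x) := by
    refine Asymptotics.IsBigO.trans_isLittleO ?_ (isLittleO_exp_bound k hk hβ)
    rw [Asymptotics.isBigO_iff]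
    refine ⟨A, ?_⟩
    filter_upwards [eventually_ge_atTop x₀] with x hx
    have hx0 : (0:ℝ) < x := by linarith
    have h := hbound x hx
    rw [Real.norm_eq_abs, Real.norm_eq_abs, abs_mul]
    have hg0 : 0 < x ^ (k+1) * Real.exp (-β * Real.sqrt (Real.log x)) := by positivity
    rw [abs_of_pos hg0, abs_of_pos (Real.rpow_pos_of_pos hx0 k)]
    calc x ^ k * |Er m n x| ≤ x ^ k * (A * (x * Real.exp (-β * Real.sqrt (Real.log x)))) :=
          mul_le_mul_of_nonneg_left h (le_of_lt (Real.rpow_pos_of_pos hx0 k))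
      _ = A * (x ^ (k+1) * Real.exp (-β * Real.sqrt (Real.log x))) := by
          rw [Real.rpow_add_one (ne_of_gt hx0) k]; ring
  have hterm4 : (fun x : ℝ => Er m n (x ^ (k+1))) =o[atTop]
      (fun x : ℝ => x ^ (k+1) / Real.log x) := by
    set β₂ := β * Real.sqrt (k+1) with hβ₂def
    have hβ₂ : 0 < β₂ := mul_pos hβ (Real.sqrt_pos.2 hk10)
    refine Asymptotics.IsBigO.trans_isLittleO ?_ (isLittleO_exp_bound k hk hβ₂)
    rw [Asymptotics.isBigO_iff]
    refine ⟨A, ?_⟩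
    filter_upwards [(tendsto_rpow_atTop hk10).eventually_ge_atTop x₀,
      eventually_ge_atTop (1:ℝ)] with x hxy hx1
    have hx0 : (0:ℝ) < x := by linarith
    have h := hbound _ hxy
    rw [Real.log_rpow hx0, Real.sqrt_mul (le_of_lt hk10)] at h
    have heq : -β * (Real.sqrt (k+1) * Real.sqrt (Real.log x))
        = -β₂ * Real.sqrt (Real.log x) := by rw [hβ₂def]; ring
    rw [heq] at h
    rw [Real.norm_eq_abs, Real.norm_eq_abs]
    have hg0 : 0 < x ^ (k+1) * Real.exp (-β₂ * Real.sqrt (Real.log x)) := by positivity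
    rw [abs_of_pos hg0]
    exact h
  have hterm3 : (fun x : ℝ => ∫ t in (3/2:ℝ)..x, (k * t ^ (k-1)) * Er m n t)
      =o[atTop] (fun x : ℝ => x ^ (k+1) / Real.log x) := by
    set β₃ := β / Real.sqrt 2 with hβ₃def
    have hβ₃ : 0 < β₃ := div_pos hβ (by positivity)
    set C₀ := |∫ t in (3/2:ℝ)..x₀, (k * t ^ (k-1)) * Er m n t| with hC₀def
    set c := |k| * A with hcdef
    have hc : 0 ≤ c := mul_nonneg (abs_nonneg _) hA
    set g : ℝ → ℝ := fun x => C₀ + (c/(k+1)) * x ^ ((k+1)/2)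
      + (c/(k+1)) * (x ^ (k+1) * Real.exp (-β₃ * Real.sqrt (Real.log x))) with hgdef
    have hgo : g =o[atTop] (fun x : ℝ => x ^ (k+1) / Real.log x) :=
      ((hterm1 C₀).add ((isLittleO_half_bound k hk).const_mul_left _)).add
        ((isLittleO_exp_bound k hk hβ₃).const_mul_left _)
    refine Asymptotics.IsBigO.trans_isLittleO ?_ hgo
    rw [Asymptotics.isBigO_iff]
    refine ⟨1, ?_⟩
    -- continuity helper for the exponential comparison function
    have hcont_ce : ∀ {a b : ℝ}, 0 < a → a ≤ b → IntervalIntegrable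
        (fun t : ℝ => c * (t ^ k * Real.exp (-β * Real.sqrt (Real.log t))))
        MeasureTheory.volume a b := by
      intro a b ha hab
      have hsub : Set.uIcc a b ⊆ Set.Ioi 0 := by
        rw [Set.uIcc_of_le hab]; intro t ht; exact Set.mem_Ioi.2 (lt_of_lt_of_le ha ht.1)
      apply ContinuousOn.intervalIntegrable
      refine ContinuousOn.mul continuousOn_const
        (ContinuousOn.mul ((continuousOn_rpow_c k).mono hsub) ?_)
      refine Real.continuous_exp.comp_continuousOn
        (ContinuousOn.mul continuousOn_const
          (Real.continuous_sqrt.comp_continuousOn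
            (Real.continuousOn_log.mono (fun t ht => ?_))))
      exact ne_of_gt (Set.mem_Ioi.1 (hsub ht))
    have hcont_pw : ∀ {a b : ℝ}, 0 < a → a ≤ b → IntervalIntegrable
        (fun t : ℝ => c * t ^ k) MeasureTheory.volume a b := by
      intro a b ha hab
      have hsub : Set.uIcc a b ⊆ Set.Ioi 0 := by
        rw [Set.uIcc_of_le hab]; intro t ht; exact Set.mem_Ioi.2 (lt_of_lt_of_le ha ht.1)
      exact (continuousOn_const.mul ((continuousOn_rpow_c k).mono hsub)).intervalIntegrable
    filter_upwards [eventually_ge_atTop (x₀^2), eventually_ge_atTop x₀] with x hxsq hxx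
    have hx2 : (2:ℝ) ≤ x := le_trans hx₀2 hxx
    have hx0 : (0:ℝ) < x := by linarith
    have hx₀0 : (0:ℝ) < x₀ := by linarith
    have hsx : x₀ ≤ Real.sqrt x := by
      have h := Real.sqrt_le_sqrt hxsq
      rwa [Real.sqrt_sq (le_of_lt hx₀0)] at h
    have hsx0 : (0:ℝ) < Real.sqrt x := lt_of_lt_of_le hx₀0 hsx
    have hsxx : Real.sqrt x ≤ x := by
      have h := Real.sqrt_le_sqrt (show x ≤ x^2 by nlinarith)
      rwa [Real.sqrt_sq (le_of_lt hx0)] at h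
    have h32x₀ : (3/2:ℝ) ≤ x₀ := by linarith
    have hsplit1 : (∫ t in (3/2:ℝ)..x, (k * t ^ (k-1)) * Er m n t)
        = (∫ t in (3/2:ℝ)..x₀, (k * t ^ (k-1)) * Er m n t)
          + ∫ t in x₀..x, (k * t ^ (k-1)) * Er m n t :=
      (intervalIntegral.integral_add_adjacent_intervals
        (iiE k m n (by norm_num) h32x₀) (iiE k m n (by linarith) hxx)).symm
    -- pointwise bound on [x₀, x]
    have hpw : ∀ t ∈ Set.Icc x₀ x, |(k * t ^ (k-1)) * Er m n t|
        ≤ c * (t ^ k * Real.exp (-β * Real.sqrt (Real.log t))) := by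
      intro t ht
      have ht0 : (0:ℝ) < t := lt_of_lt_of_le hx₀0 ht.1
      have hE := hbound t ht.1
      have htk : (0:ℝ) < t ^ (k-1) := Real.rpow_pos_of_pos ht0 _
      calc |(k * t ^ (k-1)) * Er m n t| = |k| * t ^ (k-1) * |Er m n t| := by
            rw [abs_mul, abs_mul, abs_of_pos htk]
        _ ≤ |k| * t ^ (k-1) * (A * (t * Real.exp (-β * Real.sqrt (Real.log t)))) :=
            mul_le_mul_of_nonneg_left hE (by positivity)
        _ = c * ((t ^ (k-1) * t) * Real.exp (-β * Real.sqrt (Real.log t))) := by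
            rw [hcdef]; ring
        _ = c * (t ^ k * Real.exp (-β * Real.sqrt (Real.log t))) := by
            rw [← Real.rpow_add_one (ne_of_gt ht0) (k-1)]; ring_nf
    have htail1 : |∫ t in x₀..x, (k * t ^ (k-1)) * Er m n t|
        ≤ ∫ t in x₀..x, c * (t ^ k * Real.exp (-β * Real.sqrt (Real.log t))) := by
      refine le_trans (intervalIntegral.abs_integral_le_integral_abs hxx) ?_
      exact intervalIntegral.integral_mono_on hxx (iiE k m n (by linarith) hxx).abs
        (hcont_ce hx₀0 hxx) hpw
    have hsplit2 : (∫ t in x₀..x, c * (t ^ k * Real.exp (-β * Real.sqrt (Real.log t))))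
        = (∫ t in x₀..(Real.sqrt x), c * (t ^ k * Real.exp (-β * Real.sqrt (Real.log t))))
          + ∫ t in (Real.sqrt x)..x, c * (t ^ k * Real.exp (-β * Real.sqrt (Real.log t))) :=
      (intervalIntegral.integral_add_adjacent_intervals
        (hcont_ce hx₀0 hsx) (hcont_ce hsx0 hsxx)).symm
    have hpiece1 : (∫ t in x₀..(Real.sqrt x), c * (t ^ k * Real.exp (-β * Real.sqrt (Real.log t))))
        ≤ (c/(k+1)) * x ^ ((k+1)/2) := by
      have h1 : (∫ t in x₀..(Real.sqrt x), c * (t ^ k * Real.exp (-β * Real.sqrt (Real.log t))))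
          ≤ ∫ t in x₀..(Real.sqrt x), c * t ^ k := by
        refine intervalIntegral.integral_mono_on hsx (hcont_ce hx₀0 hsx) (hcont_pw hx₀0 hsx) ?_
        intro t ht
        have ht1 : (1:ℝ) ≤ t := le_trans (by linarith) ht.1
        have hexp : Real.exp (-β * Real.sqrt (Real.log t)) ≤ 1 := by
          rw [Real.exp_le_one_iff]
          have : 0 ≤ Real.sqrt (Real.log t) := Real.sqrt_nonneg _
          nlinarith
        have htk : (0:ℝ) ≤ t ^ k := le_of_lt (Real.rpow_pos_of_pos (by linarith) _)
        calc c * (t ^ k * Real.exp (-β * Real.sqrt (Real.log t))) ≤ c * (t ^ k * 1) := by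
              apply mul_le_mul_of_nonneg_left _ hc
              exact mul_le_mul_of_nonneg_left hexp htk
          _ = c * t ^ k := by ring
      have h2 : (∫ t in x₀..(Real.sqrt x), c * t ^ k)
          = c * (((Real.sqrt x) ^ (k+1) - x₀ ^ (k+1)) / (k+1)) := by
        rw [intervalIntegral.integral_const_mul, integral_rpow (Or.inl hk)]
      have h3 : (Real.sqrt x) ^ (k+1) = x ^ ((k+1)/2) := by
        rw [Real.sqrt_eq_rpow, ← Real.rpow_mul (le_of_lt hx0)]
        ring_nf
      have hx₀p : (0:ℝ) ≤ x₀ ^ (k+1) := le_of_lt (Real.rpow_pos_of_pos hx₀0 _)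
      refine le_trans h1 ?_
      rw [h2, div_mul_eq_mul_div, mul_div_assoc]
      have hx₀p : (0:ℝ) ≤ x₀ ^ (k+1) := le_of_lt (Real.rpow_pos_of_pos hx₀0 _)
      have hXP : (Real.sqrt x) ^ (k+1) - x₀ ^ (k+1) ≤ x ^ ((k+1)/2) := by
        rw [h3]; linarith
      exact mul_le_mul_of_nonneg_left ((div_le_div_iff_of_pos_right hk10).2 hXP) hc
    have hpiece2 : (∫ t in (Real.sqrt x)..x, c * (t ^ k * Real.exp (-β * Real.sqrt (Real.log t))))
        ≤ (c/(k+1)) * (x ^ (k+1) * Real.exp (-β₃ * Real.sqrt (Real.log x))) := by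
      set K := Real.exp (-β₃ * Real.sqrt (Real.log x)) with hKdef
      have hK0 : 0 < K := Real.exp_pos _
      have h1 : (∫ t in (Real.sqrt x)..x, c * (t ^ k * Real.exp (-β * Real.sqrt (Real.log t))))
          ≤ ∫ t in (Real.sqrt x)..x, (c * K) * t ^ k := by
        have hsub : Set.uIcc (Real.sqrt x) x ⊆ Set.Ioi 0 := by
          rw [Set.uIcc_of_le hsxx]; intro t ht; exact Set.mem_Ioi.2 (lt_of_lt_of_le hsx0 ht.1)
        refine intervalIntegral.integral_mono_on hsxx (hcont_ce hsx0 hsxx)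
          ((continuousOn_const.mul ((continuousOn_rpow_c k).mono hsub)).intervalIntegrable) ?_
        intro t ht
        have ht0 : (0:ℝ) < t := lt_of_lt_of_le hsx0 ht.1
        have hlogt : Real.log x / 2 ≤ Real.log t := by
          rw [← Real.log_sqrt (le_of_lt hx0)]
          exact Real.log_le_log hsx0 ht.1
        have hsq : Real.sqrt (Real.log x) / Real.sqrt 2 ≤ Real.sqrt (Real.log t) := by
          rw [← Real.sqrt_div (Real.log_nonneg (by linarith)) 2]
          exact Real.sqrt_le_sqrt hlogt
        have hexp : Real.exp (-β * Real.sqrt (Real.log t)) ≤ K := by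
          rw [hKdef]
          apply Real.exp_le_exp.2
          have h' : -β * Real.sqrt (Real.log t) ≤ -β * (Real.sqrt (Real.log x) / Real.sqrt 2) :=
            mul_le_mul_of_nonpos_left hsq (by linarith : -β ≤ 0)
          refine le_trans h' (le_of_eq ?_)
          rw [hβ₃def]
          ring
        have htk : (0:ℝ) ≤ t ^ k := le_of_lt (Real.rpow_pos_of_pos ht0 _)
        calc c * (t ^ k * Real.exp (-β * Real.sqrt (Real.log t))) ≤ c * (t ^ k * K) :=
              mul_le_mul_of_nonneg_left (mul_le_mul_of_nonneg_left hexp htk) hc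
          _ = (c * K) * t ^ k := by ring
      have h2 : (∫ t in (Real.sqrt x)..x, (c * K) * t ^ k)
          = (c * K) * ((x ^ (k+1) - (Real.sqrt x) ^ (k+1)) / (k+1)) := by
        rw [intervalIntegral.integral_const_mul, integral_rpow (Or.inl hk)]
      refine le_trans h1 ?_
      rw [h2]
      have hs0 : (0:ℝ) ≤ (Real.sqrt x) ^ (k+1) := le_of_lt (Real.rpow_pos_of_pos hsx0 _)
      have hcK : 0 ≤ c * K := mul_nonneg hc (le_of_lt hK0)
      calc (c * K) * ((x ^ (k+1) - (Real.sqrt x) ^ (k+1)) / (k+1))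
          ≤ (c * K) * (x ^ (k+1) / (k+1)) :=
            mul_le_mul_of_nonneg_left ((div_le_div_iff_of_pos_right hk10).2 (by linarith)) hcK
        _ = (c/(k+1)) * (x ^ (k+1) * K) := by ring
    have htail2 : |∫ t in x₀..x, (k * t ^ (k-1)) * Er m n t|
        ≤ (c/(k+1)) * x ^ ((k+1)/2)
          + (c/(k+1)) * (x ^ (k+1) * Real.exp (-β₃ * Real.sqrt (Real.log x))) := by
      refine le_trans htail1 ?_
      rw [hsplit2]
      exact add_le_add hpiece1 hpiece2
    have hIb : |∫ t in (3/2:ℝ)..x, (k * t ^ (k-1)) * Er m n t| ≤ g x := by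
      rw [hsplit1]
      refine le_trans (abs_add_le _ _) ?_
      rw [hgdef]
      have h1 : |∫ t in (3/2:ℝ)..x₀, (k * t ^ (k-1)) * Er m n t| = C₀ := rfl
      rw [h1]
      dsimp only
      linarith [htail2]
    rw [Real.norm_eq_abs, Real.norm_eq_abs, one_mul]
    exact le_trans hIb (le_abs_self _)
  refine ⟨?_, hterm4⟩
  have hsum := (((hterm1 ((1 / (Nat.totient m : ℝ)) * ((3/2:ℝ) ^ k * li (3/2)
      - li ((3/2:ℝ) ^ (k+1))))).add hterm2).sub hterm3).sub hterm4
  refine hsum.congr' ?_ (Filter.EventuallyEq.refl _ _)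
  filter_upwards [eventually_ge_atTop (2:ℝ)] with x hx
  exact (diff_eq k hk m n hx).symm

end aux

theorem stmt_0 (k : ℝ) (hk : k > -1) (m n : ℕ) (hm : 0 < m) (hn : 0 < n)
    (hmn : Nat.Coprime m n)
    (hPNT : ∃ α > (0:ℝ),
      (fun x => piCount x m n - (1 / (Nat.totient m : ℝ)) * ∫ t in (2:ℝ)..x, 1 / Real.log t)
        =O[atTop] fun x => x * Real.exp (-(α / 2) * Real.sqrt (Real.log x))) :
    Tendsto (fun x : ℝ => piPow k x m n / piCount (x ^ (k + 1)) m n) atTop (nhds 1) := by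
  have hk' : (-1:ℝ) < k := hk
  have hk10 : (0:ℝ) < k + 1 := by linarith
  have hPNT' : ∃ α > (0:ℝ), (Er m n) =O[atTop]
      fun x => x * Real.exp (-(α/2) * Real.sqrt (Real.log x)) := hPNT
  obtain ⟨hdiff_o, hEr_o⟩ := err_littleO k hk' m n hPNT'
  have hφ0 : (0:ℝ) < (Nat.totient m : ℝ) := by exact_mod_cast Nat.totient_pos.2 hm
  set φ := (Nat.totient m : ℝ) with hφdef
  set h : ℝ → ℝ := fun x => x ^ (k+1) / Real.log x with hhdef
  set c : ℝ := 1 / (4 * (k+1) * φ) with hcdef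
  have hc : 0 < c := by rw [hcdef]; positivity
  have hh_pos : ∀ᶠ x : ℝ in atTop, 0 < h x := by
    filter_upwards [eventually_ge_atTop (2:ℝ)] with x hx
    have hx0 : (0:ℝ) < x := by linarith
    have hl : 0 < Real.log x := Real.log_pos (by linarith)
    exact div_pos (Real.rpow_pos_of_pos hx0 _) hl
  have hlow : ∀ᶠ x : ℝ in atTop, c * h x ≤ piCount (x ^ (k+1)) m n := by
    have hev4 : ∀ᶠ x : ℝ in atTop, (4:ℝ) ≤ x ^ (k+1) :=
      (tendsto_rpow_atTop hk10).eventually_ge_atTop 4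
    have hev2 : ∀ᶠ x : ℝ in atTop, (2:ℝ) ≤ x ^ ((k+1)/2) :=
      (tendsto_rpow_atTop (by linarith : (0:ℝ) < (k+1)/2)).eventually_ge_atTop 2
    have hevE : ∀ᶠ x : ℝ in atTop, ‖Er m n (x ^ (k+1))‖ ≤ c * ‖h x‖ := hEr_o.def hc
    filter_upwards [hev4, hev2, hevE, eventually_ge_atTop (2:ℝ)] with x h4 h2 hE hx2
    have hx0 : (0:ℝ) < x := by linarith
    have hl : 0 < Real.log x := Real.log_pos (by linarith)
    have hy0 : 0 < x ^ (k+1) := Real.rpow_pos_of_pos hx0 _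
    have hh0 : 0 < h x := div_pos hy0 hl
    have hdec : piCount (x ^ (k+1)) m n = (1/φ) * li (x ^ (k+1)) + Er m n (x ^ (k+1)) := by
      rw [Er, hφdef]; ring
    have hli := li_lb h4
    have hsqrt : Real.sqrt (x ^ (k+1)) = x ^ ((k+1)/2) := by
      rw [Real.sqrt_eq_rpow, ← Real.rpow_mul (le_of_lt hx0)]; ring_nf
    have hlog : Real.log (x ^ (k+1)) = (k+1) * Real.log x := Real.log_rpow hx0 _
    rw [hsqrt, hlog] at hli
    have hhalf : x ^ ((k+1)/2) ≤ (1/2) * x ^ (k+1) := by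
      have hsum : x ^ (k+1) = x ^ ((k+1)/2) * x ^ ((k+1)/2) := by
        rw [← Real.rpow_add hx0]; ring_nf
      have hp : 0 < x ^ ((k+1)/2) := Real.rpow_pos_of_pos hx0 _
      nlinarith
    have hD : 0 < (k+1) * Real.log x := mul_pos hk10 hl
    have key1 : (x ^ (k+1) / 2) / ((k+1) * Real.log x) ≤ li (x ^ (k+1)) :=
      le_trans ((div_le_div_iff_of_pos_right hD).2 (by linarith)) hli
    have key2 : (1/φ) * ((x ^ (k+1) / 2) / ((k+1) * Real.log x)) ≤ (1/φ) * li (x ^ (k+1)) :=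
      mul_le_mul_of_nonneg_left key1 (by positivity)
    have hE' : -(c * h x) ≤ Er m n (x ^ (k+1)) := by
      rw [Real.norm_eq_abs, Real.norm_eq_abs, abs_of_pos hh0] at hE
      have := (abs_le.1 hE).1
      linarith
    have halg : (1/φ) * ((x ^ (k+1) / 2) / ((k+1) * Real.log x)) = 2 * (c * h x) := by
      rw [hcdef, hhdef]
      field_simp
      ring
    rw [hdec]
    rw [halg] at key2
    linarith
  have hD_pos : ∀ᶠ x : ℝ in atTop, 0 < piCount (x ^ (k+1)) m n := by
    filter_upwards [hlow, hh_pos] with x h1 h2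
    exact lt_of_lt_of_le (mul_pos hc h2) h1
  have hratio : Tendsto (fun x : ℝ =>
      (piPow k x m n - piCount (x ^ (k+1)) m n) / piCount (x ^ (k+1)) m n) atTop (nhds 0) := by
    rw [tendsto_zero_iff_abs_tendsto_zero]
    have hg0 : Tendsto (fun x : ℝ =>
        (1/c) * |(piPow k x m n - piCount (x ^ (k+1)) m n) / h x|) atTop (nhds 0) := by
      have h1 := hdiff_o.tendsto_div_nhds_zero
      have h2 := h1.abs
      rw [abs_zero] at h2
      have h3 := h2.const_mul (1/c)
      rwa [mul_zero] at h3
    apply squeeze_zero' (Filter.Eventually.of_forall (fun x => abs_nonneg _)) _ hg0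
    filter_upwards [hlow, hh_pos] with x h1 h2
    have hD0 : 0 < piCount (x ^ (k+1)) m n := lt_of_lt_of_le (mul_pos hc h2) h1
    have hch : 0 < c * h x := mul_pos hc h2
    rw [abs_div, abs_div, abs_of_pos hD0, abs_of_pos h2]
    have hstep : |piPow k x m n - piCount (x ^ (k+1)) m n| / piCount (x ^ (k+1)) m n
        ≤ |piPow k x m n - piCount (x ^ (k+1)) m n| / (c * h x) :=
      div_le_div_of_nonneg_left (abs_nonneg _) hch h1
    refine le_trans hstep (le_of_eq ?_)
    field_simp
  have hfinal : (fun x : ℝ => 1 + (piPow k x m n - piCount (x ^ (k+1)) m n)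
      / piCount (x ^ (k+1)) m n) =ᶠ[atTop]
      (fun x : ℝ => piPow k x m n / piCount (x ^ (k+1)) m n) := by
    filter_upwards [hD_pos] with x hD
    field_simp
    ring
  have hlim : Tendsto (fun x : ℝ => 1 + (piPow k x m n - piCount (x ^ (k+1)) m n)
      / piCount (x ^ (k+1)) m n) atTop (nhds 1) := by
    have := (tendsto_const_nhds (x := (1:ℝ)) (f := atTop)).add hratio
    rwa [add_zero] at this
  exact Tendsto.congr' hfinal hlim
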